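/- Let ρ be a PSD operator and suppose |φ_1⟩,…,|φ_k⟩ are linearly independent symmetric m-qubit vectors in the kernel of Tr_S ρ, where ρ is an N-qubit symmetric state and m = N−|S|. Then for any fixed |S|-qubit symmetric vector |ψ⟩, the projected vectors P_N(|ψ⟩⊗|φ_i⟩), i = 1,…,k, are linearly independent, where P_N is the orthogonal projector onto the symmetric subspace S_N. -/

import Mathlib

abbrev QIdx (N : ℕ) := Fin N → Fin 2

def SymmVec {N : ℕ} (ψ : QIdx N → ℂ) : Prop :=
  ∀ σ : Equiv.Perm (Fin N), ∀ f : QIdx N, ψ (f ∘ σ) = ψ f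

def tens {a b : ℕ} (ψ : QIdx a → ℂ) (φ : QIdx b → ℂ) : QIdx (a + b) → ℂ :=
  fun f => ψ (fun i => f (Fin.castAdd b i)) * φ (fun j => f (Fin.natAdd a j))

/-- The orthogonal projector `P_N` onto the symmetric subspace `S_N`,
applied to a vector. -/
noncomputable def symProj (N : ℕ) (ψ : QIdx N → ℂ) : QIdx N → ℂ :=
  fun f => (N.factorial : ℂ)⁻¹ * ∑ σ : Equiv.Perm (Fin N), ψ (f ∘ σ)

/-! ### Auxiliary machinery -/

/-- The weight (number of `1` entries) of a basis index. -/
def wt {N : ℕ} (f : QIdx N) : ℕ := ∑ i, if f i = 1 then 1 else 0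

lemma wt_comp_perm {N : ℕ} (f : QIdx N) (σ : Equiv.Perm (Fin N)) :
    wt (f ∘ σ) = wt f := by
  unfold wt
  exact Equiv.sum_comp σ (fun i => if f i = 1 then 1 else 0)

lemma wt_eq_card {N : ℕ} (f : QIdx N) :
    wt f = Fintype.card {i // f i = 1} := by
  rw [Fintype.card_subtype, Finset.card_filter, wt]

lemma exists_perm_comp {N : ℕ} {f g : QIdx N} (h : wt f = wt g) :
    ∃ σ : Equiv.Perm (Fin N), f ∘ σ = g := by
  classical
  rw [wt_eq_card, wt_eq_card] at h
  have h2 : Fintype.card {i // ¬ g i = 1} = Fintype.card {i // ¬ f i = 1} := by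
    rw [Fintype.card_subtype_compl, Fintype.card_subtype_compl, h]
  have e1 : {i // g i = 1} ≃ {i // f i = 1} := Fintype.equivOfCardEq h.symm
  have e2 : {i // ¬ g i = 1} ≃ {i // ¬ f i = 1} := Fintype.equivOfCardEq h2
  have hzero : ∀ v : Fin 2, v ≠ 1 → v = 0 := by decide
  refine ⟨(Equiv.sumCompl (fun i => g i = 1)).symm.trans
    ((e1.sumCongr e2).trans (Equiv.sumCompl (fun i => f i = 1))), funext fun i => ?_⟩
  by_cases hi : g i = 1
  · have hσ : ((Equiv.sumCompl (fun i => g i = 1)).symm.trans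
        ((e1.sumCongr e2).trans (Equiv.sumCompl (fun i => f i = 1)))) i
        = (e1 ⟨i, hi⟩ : Fin N) := by
      simp only [Equiv.trans_apply, Equiv.sumCongr_apply]
      rw [Equiv.sumCompl_symm_apply_of_pos (p := fun j => g j = 1) hi, Sum.map_inl, Equiv.sumCompl_apply_inl]
    simp only [Function.comp_apply, hσ]
    rw [(e1 ⟨i, hi⟩).2, hi]
  · have hσ : ((Equiv.sumCompl (fun i => g i = 1)).symm.trans
        ((e1.sumCongr e2).trans (Equiv.sumCompl (fun i => f i = 1)))) i
        = (e2 ⟨i, hi⟩ : Fin N) := by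
      simp only [Equiv.trans_apply, Equiv.sumCongr_apply]
      rw [Equiv.sumCompl_symm_apply_of_neg (p := fun j => g j = 1) hi, Sum.map_inr, Equiv.sumCompl_apply_inr]
    simp only [Function.comp_apply, hσ]
    rw [hzero _ (e2 ⟨i, hi⟩).2, hzero _ hi]

/-- The generating polynomial of a vector. -/
noncomputable def wpoly {N : ℕ} (χ : QIdx N → ℂ) : Polynomial ℂ :=
  ∑ f : QIdx N, Polynomial.C (χ f) * Polynomial.X ^ wt f

lemma wpoly_zero {N : ℕ} : wpoly (0 : QIdx N → ℂ) = 0 := by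
  simp [wpoly]

lemma wpoly_coeff {N : ℕ} (χ : QIdx N → ℂ) (w : ℕ) :
    (wpoly χ).coeff w = ∑ f : QIdx N, if wt f = w then χ f else 0 := by
  rw [wpoly, Polynomial.finset_sum_coeff]
  refine Finset.sum_congr rfl fun f _ => ?_
  rw [Polynomial.coeff_C_mul, Polynomial.coeff_X_pow]
  by_cases h : wt f = w
  · simp [h]
  · rw [if_neg h, if_neg (fun hh => h hh.symm), mul_zero]

lemma eq_zero_of_wpoly_eq_zero {N : ℕ} {χ : QIdx N → ℂ} (hs : SymmVec χ)
    (h : wpoly χ = 0) : χ = 0 := by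
  classical
  funext f
  have hc : (wpoly χ).coeff (wt f) = 0 := by rw [h]; simp
  rw [wpoly_coeff] at hc
  have key : ∀ g : QIdx N, (if wt g = wt f then χ g else 0)
      = (if wt g = wt f then χ f else 0) := by
    intro g
    split
    · rename_i hg
      obtain ⟨σ, hσ⟩ := exists_perm_comp hg.symm
      rw [← hσ, hs σ f]
    · rfl
  rw [Finset.sum_congr rfl (fun g _ => key g), ← Finset.sum_filter,
    Finset.sum_const] at hc
  have hmem : f ∈ Finset.univ.filter (fun g : QIdx N => wt g = wt f) := by
    simp
  have hcard : ((Finset.univ.filter (fun g : QIdx N => wt g = wt f)).card : ℂ) ≠ 0 := by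
    exact_mod_cast Finset.card_ne_zero_of_mem hmem
  rw [nsmul_eq_mul] at hc
  have := mul_eq_zero.mp hc
  simpa [hcard] using this

lemma wpoly_symProj {N : ℕ} (χ : QIdx N → ℂ) : wpoly (symProj N χ) = wpoly χ := by
  classical
  have hfac : (N.factorial : ℂ) ≠ 0 := Nat.cast_ne_zero.mpr N.factorial_ne_zero
  have step : ∀ σ : Equiv.Perm (Fin N),
      (∑ f : QIdx N, Polynomial.C (χ (f ∘ σ)) * Polynomial.X ^ wt f)
        = wpoly χ := by
    intro σ
    refine Fintype.sum_bijective (fun f : QIdx N => f ∘ σ) ?_ _ _ fun f => ?_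
    · constructor
      · intro a b hab
        funext i
        have := congrFun hab (σ.symm i)
        simpa using this
      · intro b
        exact ⟨b ∘ σ.symm, by funext i; simp⟩
    · rw [wt_comp_perm]
  calc wpoly (symProj N χ)
      = ∑ f : QIdx N, ∑ σ : Equiv.Perm (Fin N),
          Polynomial.C (N.factorial : ℂ)⁻¹ *
            (Polynomial.C (χ (f ∘ σ)) * Polynomial.X ^ wt f) := by
        refine Finset.sum_congr rfl fun f _ => ?_
        rw [symProj, map_mul, map_sum, Finset.mul_sum, Finset.sum_mul]
        refine Finset.sum_congr rfl fun σ _ => by ring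
    _ = ∑ σ : Equiv.Perm (Fin N), ∑ f : QIdx N,
          Polynomial.C (N.factorial : ℂ)⁻¹ *
            (Polynomial.C (χ (f ∘ σ)) * Polynomial.X ^ wt f) := Finset.sum_comm
    _ = ∑ _σ : Equiv.Perm (Fin N), Polynomial.C (N.factorial : ℂ)⁻¹ * wpoly χ := by
        refine Finset.sum_congr rfl fun σ _ => ?_
        rw [← Finset.mul_sum, step σ]
    _ = wpoly χ := by
        rw [Finset.sum_const, Finset.card_univ, Fintype.card_perm, Fintype.card_fin,
          ← Polynomial.smul_eq_C_mul, ← Nat.cast_smul_eq_nsmul ℂ,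
          smul_smul, mul_inv_cancel₀ hfac, one_smul]

/-- Splitting a basis index into its two halves. -/
noncomputable def splitEquiv (s m : ℕ) : QIdx (s + m) ≃ QIdx s × QIdx m where
  toFun f := (fun i => f (Fin.castAdd m i), fun j => f (Fin.natAdd s j))
  invFun p := fun i => Sum.elim p.1 p.2 (finSumFinEquiv.symm i)
  left_inv f := by
    funext i
    rcases hx : finSumFinEquiv.symm i with x | x
    · have hi : i = Fin.castAdd m x := by
        have := congrArg finSumFinEquiv hx
        simpa using this
      simp [hx, hi]
    · have hi : i = Fin.natAdd s x := by
        have := congrArg finSumFinEquiv hx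
        simpa using this
      simp [hx, hi]
  right_inv p := by
    refine Prod.ext ?_ ?_
    · funext i; simp [finSumFinEquiv_symm_apply_castAdd]
    · funext j; simp [finSumFinEquiv_symm_apply_natAdd]

lemma wt_decomp {s m : ℕ} (f : QIdx (s + m)) :
    wt f = wt (fun i => f (Fin.castAdd m i)) + wt (fun j => f (Fin.natAdd s j)) := by
  unfold wt
  exact Fin.sum_univ_add (fun i => if f i = 1 then 1 else 0)

lemma wpoly_tens {s m : ℕ} (ψ : QIdx s → ℂ) (φ : QIdx m → ℂ) :
    wpoly (tens ψ φ) = wpoly ψ * wpoly φ := by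
  classical
  have hrhs : (∑ p : QIdx s × QIdx m,
      Polynomial.C (ψ p.1) * Polynomial.X ^ wt p.1 *
        (Polynomial.C (φ p.2) * Polynomial.X ^ wt p.2))
      = wpoly ψ * wpoly φ := by
    rw [Fintype.sum_prod_type, wpoly, wpoly, Finset.sum_mul_sum]
  rw [← hrhs, wpoly]
  refine Fintype.sum_bijective (splitEquiv s m) (splitEquiv s m).bijective _ _ fun f => ?_
  rw [tens, wt_decomp f, map_mul, pow_add]
  simp only [splitEquiv, Equiv.coe_fn_mk]
  ring

/-- The submodule of symmetric vectors. -/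
noncomputable def symmSub (N : ℕ) : Submodule ℂ (QIdx N → ℂ) where
  carrier := {χ | SymmVec χ}
  add_mem' := by
    intro a b ha hb σ f
    simp only [Pi.add_apply]
    rw [ha σ f, hb σ f]
  zero_mem' := by intro σ f; simp
  smul_mem' := by
    intro c a ha σ f
    simp only [Pi.smul_apply]
    rw [ha σ f]

set_option maxHeartbeats 1000000 in
/-- if `|ψ⟩` is a nonzero symmetric `s`-qubit vector and
`|φ_1⟩, …, |φ_k⟩` are linearly independent symmetric `m`-qubit vectors, then the
projected vectors `P_N(|ψ⟩ ⊗ |φ_i⟩)` (with `N = s + m`) are linearly independent. -/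
theorem stmt8 (s m k : ℕ) (ψ : QIdx s → ℂ) (hψsym : SymmVec ψ) (hψ : ψ ≠ 0)
    (φ : Fin k → (QIdx m → ℂ)) (hφsym : ∀ i, SymmVec (φ i))
    (hφ : LinearIndependent ℂ φ) :
    LinearIndependent ℂ (fun i : Fin k => symProj (s + m) (tens ψ (φ i))) := by
  classical
  let L : (QIdx m → ℂ) →ₗ[ℂ] (QIdx (s + m) → ℂ) :=
    { toFun := fun χ => symProj (s + m) (tens ψ χ)
      map_add' := by
        intro a b
        funext f
        simp only [symProj, tens, Pi.add_apply]
        rw [← mul_add, ← Finset.sum_add_distrib]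
        congr 1
        refine Finset.sum_congr rfl fun σ _ => ?_
        ring
      map_smul' := by
        intro r a
        funext f
        simp only [symProj, tens, Pi.smul_apply, smul_eq_mul, RingHom.id_apply]
        rw [Finset.mul_sum, Finset.mul_sum, Finset.mul_sum]
        refine Finset.sum_congr rfl fun σ _ => ?_
        ring }
  have hdisj : Disjoint (Submodule.span ℂ (Set.range φ)) (LinearMap.ker L) := by
    rw [Submodule.disjoint_def]
    intro χ hsp hker
    have hsym : SymmVec χ := by
      have hle : Submodule.span ℂ (Set.range φ) ≤ symmSub m := by
        rw [Submodule.span_le]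
        rintro _ ⟨i, rfl⟩
        exact hφsym i
      exact hle hsp
    have hker' : symProj (s + m) (tens ψ χ) = 0 := by
      simpa [L] using (LinearMap.mem_ker.mp hker)
    have h0 : wpoly ψ * wpoly χ = 0 := by
      rw [← wpoly_tens, ← wpoly_symProj, hker', wpoly_zero]
    have hψp : wpoly ψ ≠ 0 := fun h => hψ (eq_zero_of_wpoly_eq_zero hψsym h)
    rcases mul_eq_zero.mp h0 with h | h
    · exact absurd h hψp
    · exact eq_zero_of_wpoly_eq_zero hsym h
  exact hφ.map hdisj
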